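/- Let ζ ≥ 0, let μ and ν be finite ζ-comparable measures on a measurable space X, let W ⊆ X be a measurable set with μ(W) > 0 and ν(W) > 0, and let f be of scaling type σ with f(x) > 0 for all x > 0. Let A, B, C : X × X → Set X be families of measurable subsets of X such that the functions (p,q) ↦ α_μ(A(p,q), B(p,q)), (p,q) ↦ α_ν(B(p,q), C(p,q)) and (p,q) ↦ α_μ(A(p,q), C(p,q)) are measurable with respect to the product σ-algebra on X × X. Then (1/f(μ(W))) · ∫_{W×W} α_μ(A(p,q), C(p,q)) d(μ⊗μ)(p,q) ≤ 2 · (1/f(μ(W))) · ∫_{W×W} α_μ(A(p,q), B(p,q)) d(μ⊗μ)(p,q) + 2·exp((4+σ)·ζ) · (1/f(ν(W))) · ∫_{W×W} α_ν(B(p,q), C(p,q)) d(ν⊗ν)(p,q). -/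

import Mathlib

open MeasureTheory Real

open Classical in
/-- The discrepancy `α_μ(A,B) = μ(A △ B)/μ(A ∪ B)` when `0 < μ(A ∪ B) < ∞`, and `0`
otherwise. -/
noncomputable def disc {X : Type*} [MeasurableSpace X] (μ : Measure X) (A B : Set X) : ℝ :=
  if 0 < μ (A ∪ B) ∧ μ (A ∪ B) < ⊤ then (μ (symmDiff A B)).toReal / (μ (A ∪ B)).toReal else 0

/-- Two measures are `ζ`-comparable if each is bounded by `exp ζ` times the other on all
measurable sets. -/
def Comparable {X : Type*} [MeasurableSpace X] (ζ : ℝ) (μ ν : Measure X) : Prop :=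
  ∀ S : Set X, MeasurableSet S →
    μ S ≤ ENNReal.ofReal (Real.exp ζ) * ν S ∧ ν S ≤ ENNReal.ofReal (Real.exp ζ) * μ S

/-- `f` is of scaling type `σ`: nonnegative and monotone nondecreasing on `[0,∞)`, with
`f (a·x) ≤ a^σ · f x` for all `a ≥ 1` and `x ≥ 0`. -/
def ScalingType (f : ℝ → ℝ) (σ : ℝ) : Prop :=
  (∀ x ≥ (0 : ℝ), 0 ≤ f x) ∧ MonotoneOn f (Set.Ici 0) ∧
    ∀ a ≥ (1 : ℝ), ∀ x ≥ (0 : ℝ), f (a * x) ≤ a ^ σ * f x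

section MyAux
open MeasureTheory Real
variable {X : Type*} [MeasurableSpace X] {μ ν : Measure X} {ζ : ℝ}

lemma my_disc_nonneg (μ : Measure X) (A B : Set X) : 0 ≤ disc μ A B := by
  unfold disc; split
  · positivity
  · exact le_rfl

lemma my_disc_le_one (μ : Measure X) (A B : Set X) : disc μ A B ≤ 1 := by
  unfold disc; split
  · rename_i h
    exact div_le_one_of_le₀ (ENNReal.toReal_mono h.2.ne (measure_mono Set.symmDiff_subset_union))
      ENNReal.toReal_nonneg
  · norm_num

lemma my_disc_eq [IsFiniteMeasure μ] {A B : Set X} (h : 0 < μ (A ∪ B)) :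
    disc μ A B = (μ (symmDiff A B)).toReal / (μ (A ∪ B)).toReal := by
  unfold disc; rw [if_pos ⟨h, measure_lt_top _ _⟩]

lemma my_disc_triangle (μ : Measure X) [IsFiniteMeasure μ] (A B C : Set X) :
    disc μ A C ≤ 2 * disc μ A B + 2 * disc μ B C := by
  have h2 : ∀ S : Set X, μ S ≠ ⊤ := fun S => (measure_lt_top μ S).ne
  by_cases hAC : 0 < μ (A ∪ C)
  case neg =>
    have : disc μ A C = 0 := by unfold disc; rw [if_neg]; tauto
    rw [this]
    have := my_disc_nonneg μ A B; have := my_disc_nonneg μ B C; linarith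
  set D := (μ (A ∪ C)).toReal with hD
  have hDpos : 0 < D := ENNReal.toReal_pos hAC.ne' (h2 _)
  have hsub : ∀ S T : Set X, S ⊆ T → (μ S).toReal ≤ (μ T).toReal := fun S T hST =>
    ENNReal.toReal_mono (h2 _) (measure_mono hST)
  have haddle : ∀ S T : Set X, (μ (S ∪ T)).toReal ≤ (μ S).toReal + (μ T).toReal := by
    intro S T
    rw [← ENNReal.toReal_add (h2 _) (h2 _)]
    exact ENNReal.toReal_mono (by simp [ENNReal.add_ne_top, h2]) (measure_union_le _ _)
  by_cases hAB : 0 < μ (A ∪ B)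
  · by_cases hBC : 0 < μ (B ∪ C)
    · set d1 := (μ (symmDiff A B)).toReal
      set d2 := (μ (symmDiff B C)).toReal
      set E1 := (μ (A ∪ B)).toReal
      set E2 := (μ (B ∪ C)).toReal
      have hE1 : 0 < E1 := ENNReal.toReal_pos hAB.ne' (h2 _)
      have hE2 : 0 < E2 := ENNReal.toReal_pos hBC.ne' (h2 _)
      have hd1 : 0 ≤ d1 := ENNReal.toReal_nonneg
      have hd2 : 0 ≤ d2 := ENNReal.toReal_nonneg
      rw [my_disc_eq hAC, my_disc_eq hAB, my_disc_eq hBC]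
      have htri : (μ (symmDiff A C)).toReal ≤ d1 + d2 := by
        refine le_trans (hsub _ (symmDiff A B ∪ symmDiff B C) (symmDiff_triangle A B C)) ?_
        exact haddle _ _
      have hACle : (μ (symmDiff A C)).toReal ≤ D :=
        hsub _ _ Set.symmDiff_subset_union
      by_cases hc1 : E1 ≤ 2 * d1
      · have h1 : (μ (symmDiff A C)).toReal / D ≤ 1 := div_le_one_of_le₀ hACle hDpos.le
        have h2' : (1:ℝ) ≤ 2 * (d1 / E1) := by
          rw [show 2 * (d1 / E1) = 2 * d1 / E1 by ring, le_div_iff₀ hE1]; linarith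
        have h3 : 0 ≤ 2 * (d2 / E2) := by positivity
        linarith
      by_cases hc2 : E2 ≤ 2 * d2
      · have h1 : (μ (symmDiff A C)).toReal / D ≤ 1 := div_le_one_of_le₀ hACle hDpos.le
        have h2' : (1:ℝ) ≤ 2 * (d2 / E2) := by
          rw [show 2 * (d2 / E2) = 2 * d2 / E2 by ring, le_div_iff₀ hE2]; linarith
        have h3 : 0 ≤ 2 * (d1 / E1) := by positivity
        linarith
      push_neg at hc1 hc2
      have hE1le : E1 ≤ D + d2 := by
        refine le_trans (hsub _ ((A ∪ C) ∪ symmDiff B C) ?_) (haddle _ _)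
        intro x hx
        rcases hx with hx | hx
        · exact Or.inl (Or.inl hx)
        · by_cases hxC : x ∈ C
          · exact Or.inl (Or.inr hxC)
          · exact Or.inr (Or.inl ⟨hx, hxC⟩)
      have hE2le : E2 ≤ D + d1 := by
        refine le_trans (hsub _ ((A ∪ C) ∪ symmDiff A B) ?_) (haddle _ _)
        intro x hx
        rcases hx with hx | hx
        · by_cases hxA : x ∈ A
          · exact Or.inl (Or.inl hxA)
          · exact Or.inr (Or.inr ⟨hx, hxA⟩)
        · exact Or.inl (Or.inr hx)
      have hE1D : E1 ≤ 2 * D := by nlinarith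
      have hE2D : E2 ≤ 2 * D := by nlinarith
      have k1 : d1 / D ≤ 2 * (d1 / E1) := by
        rw [show 2 * (d1 / E1) = 2 * d1 / E1 by ring, div_le_div_iff₀ hDpos hE1]
        nlinarith
      have k2 : d2 / D ≤ 2 * (d2 / E2) := by
        rw [show 2 * (d2 / E2) = 2 * d2 / E2 by ring, div_le_div_iff₀ hDpos hE2]
        nlinarith
      calc (μ (symmDiff A C)).toReal / D ≤ (d1 + d2) / D := by gcongr
          _ = d1 / D + d2 / D := add_div _ _ _
          _ ≤ 2 * (d1 / E1) + 2 * (d2 / E2) := add_le_add k1 k2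
    · push_neg at hBC
      have hBC0 : μ (B ∪ C) = 0 := le_antisymm hBC zero_le
      have hB0 : μ B = 0 := measure_mono_null Set.subset_union_left hBC0
      have hC0 : μ C = 0 := measure_mono_null Set.subset_union_right hBC0
      have h1 : disc μ A C ≤ 1 := my_disc_le_one μ A C
      have hABeq : 1 ≤ disc μ A B := by
        rw [my_disc_eq hAB, le_div_iff₀ (ENNReal.toReal_pos hAB.ne' (h2 _))]
        rw [one_mul]
        refine ENNReal.toReal_mono (h2 _) ?_
        calc μ (A ∪ B) ≤ μ A + μ B := measure_union_le _ _
          _ = μ A := by rw [hB0, add_zero]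
          _ = μ (A \ B) := by
              refine le_antisymm ?_ (measure_mono Set.diff_subset)
              calc μ A ≤ μ ((A \ B) ∪ B) :=
                    measure_mono (by intro x hx; by_cases hB : x ∈ B <;> simp [hx, hB])
                _ ≤ μ (A \ B) + μ B := measure_union_le _ _
                _ = μ (A \ B) := by rw [hB0, add_zero]
          _ ≤ μ (symmDiff A B) :=
              measure_mono (by rw [Set.symmDiff_def]; exact Set.subset_union_left)
      have := my_disc_nonneg μ B C
      linarith
  · push_neg at hAB
    have hAB0 : μ (A ∪ B) = 0 := le_antisymm hAB zero_le
    have hA0 : μ A = 0 := measure_mono_null Set.subset_union_left hAB0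
    have hB0 : μ B = 0 := measure_mono_null Set.subset_union_right hAB0
    have hCpos : 0 < μ (B ∪ C) := by
      rcases (zero_le : 0 ≤ μ (B ∪ C)).lt_or_eq with h | h
      · exact h
      · exfalso
        have hC0 : μ C = 0 := measure_mono_null Set.subset_union_right h.symm
        have : μ (A ∪ C) = 0 := measure_union_null hA0 hC0
        exact hAC.ne' this
    have h1 : disc μ A C ≤ 1 := my_disc_le_one μ A C
    have hBCeq : 1 ≤ disc μ B C := by
      rw [my_disc_eq hCpos, le_div_iff₀ (ENNReal.toReal_pos hCpos.ne' (h2 _)), one_mul]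
      refine ENNReal.toReal_mono (h2 _) ?_
      calc μ (B ∪ C) ≤ μ B + μ C := measure_union_le _ _
        _ = μ C := by rw [hB0, zero_add]
        _ = μ (C \ B) := by
            refine le_antisymm ?_ (measure_mono Set.diff_subset)
            calc μ C ≤ μ ((C \ B) ∪ B) :=
                  measure_mono (by intro x hx; by_cases hB : x ∈ B <;> simp [hx, hB])
              _ ≤ μ (C \ B) + μ B := measure_union_le _ _
              _ = μ (C \ B) := by rw [hB0, add_zero]
      exact measure_mono (by rw [Set.symmDiff_def]; exact Set.subset_union_right)
    have := my_disc_nonneg μ A B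
    linarith

lemma my_comp_toReal [IsFiniteMeasure μ] [IsFiniteMeasure ν] (hcomp : Comparable ζ μ ν)
    {S : Set X} (hS : MeasurableSet S) :
    (μ S).toReal ≤ Real.exp ζ * (ν S).toReal ∧
      (ν S).toReal ≤ Real.exp ζ * (μ S).toReal := by
  obtain ⟨h1, h2⟩ := hcomp S hS
  constructor
  · have := ENNReal.toReal_mono (by finiteness) h1
    rwa [ENNReal.toReal_mul, ENNReal.toReal_ofReal (Real.exp_nonneg ζ)] at this
  · have := ENNReal.toReal_mono (by finiteness) h2
    rwa [ENNReal.toReal_mul, ENNReal.toReal_ofReal (Real.exp_nonneg ζ)] at this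

lemma my_disc_comparable [IsFiniteMeasure μ] [IsFiniteMeasure ν] (hcomp : Comparable ζ μ ν)
    {B C : Set X} (hB : MeasurableSet B) (hC : MeasurableSet C) :
    disc μ B C ≤ Real.exp (2 * ζ) * disc ν B C := by
  by_cases hν : 0 < ν (B ∪ C)
  · have hμ : 0 < μ (B ∪ C) := by
      rcases (zero_le : 0 ≤ μ (B ∪ C)).lt_or_eq with h | h
      · exact h
      · exfalso
        have := (hcomp (B ∪ C) (hB.union hC)).2
        rw [← h, mul_zero] at this
        exact hν.ne' (le_antisymm this zero_le)
    rw [my_disc_eq hμ, my_disc_eq hν]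
    have hsd := my_comp_toReal hcomp (hB.symmDiff hC)
    have hun := my_comp_toReal hcomp (hB.union hC)
    have hμU : 0 < (μ (B ∪ C)).toReal := ENNReal.toReal_pos hμ.ne' (by finiteness)
    have hνU : 0 < (ν (B ∪ C)).toReal := ENNReal.toReal_pos hν.ne' (by finiteness)
    rw [show Real.exp (2 * ζ) * ((ν (symmDiff B C)).toReal / (ν (B ∪ C)).toReal)
        = Real.exp (2 * ζ) * (ν (symmDiff B C)).toReal / (ν (B ∪ C)).toReal by ring,
      div_le_div_iff₀ hμU hνU]
    have e2 : Real.exp (2 * ζ) = Real.exp ζ * Real.exp ζ := by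
      rw [← Real.exp_add]; ring_nf
    rw [e2]
    nlinarith [hsd.1, hun.2, Real.exp_pos ζ, ENNReal.toReal_nonneg (a := μ (symmDiff B C)),
      ENNReal.toReal_nonneg (a := ν (symmDiff B C)), hμU, hνU,
      mul_le_mul hsd.1 hun.2 ENNReal.toReal_nonneg (by positivity)]
  · have hμ0 : μ (B ∪ C) = 0 := by
      have := (hcomp (B ∪ C) (hB.union hC)).1
      have hν0 : ν (B ∪ C) = 0 := le_antisymm (not_lt.1 hν) zero_le
      rw [hν0, mul_zero] at this
      exact le_antisymm this zero_le
    have h1 : disc μ B C = 0 := by unfold disc; rw [if_neg]; simp [hμ0]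
    have h2 : disc ν B C = 0 := by
      unfold disc; rw [if_neg]; intro h; exact hν h.1
    rw [h1, h2, mul_zero]

lemma my_prod_le_smul_prod {c : ENNReal} [SFinite μ] [SFinite ν]
    (h : ∀ s : Set X, MeasurableSet s → μ s ≤ c * ν s) :
    μ.prod μ ≤ (c * c) • ν.prod ν := by
  have hle : μ ≤ c • ν := Measure.le_iff.2 (by intro s hs; simpa using h s hs)
  rw [Measure.le_iff]
  intro s hs
  rw [Measure.prod_apply hs]
  calc ∫⁻ x, μ (Prod.mk x ⁻¹' s) ∂μ
      ≤ ∫⁻ x, c * ν (Prod.mk x ⁻¹' s) ∂(c • ν) := by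
        refine lintegral_mono' hle fun x => h _ (measurable_prodMk_left hs)
    _ = c * (c * ∫⁻ x, ν (Prod.mk x ⁻¹' s) ∂ν) := by
        rw [lintegral_smul_measure, smul_eq_mul, lintegral_const_mul _ (measurable_measure_prodMk_left hs)]
    _ = ((c * c) • ν.prod ν) s := by
        simp only [Measure.smul_apply, smul_eq_mul, Measure.prod_apply hs, mul_assoc]

lemma my_setIntegral_le_smul {Y : Type*} [MeasurableSpace Y] {m1 m2 : Measure Y}
    [IsFiniteMeasure m2] {k : ENNReal} (hk : k ≠ ⊤) (hle : m1 ≤ k • m2) {g : Y → ℝ}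
    (hg : Measurable g) (h0 : ∀ y, 0 ≤ g y) (h1 : ∀ y, g y ≤ 1) (T : Set Y) :
    ∫ y in T, g y ∂m1 ≤ k.toReal * ∫ y in T, g y ∂m2 := by
  rw [integral_eq_lintegral_of_nonneg_ae (Filter.Eventually.of_forall h0)
      hg.aestronglyMeasurable,
    integral_eq_lintegral_of_nonneg_ae (Filter.Eventually.of_forall h0)
      hg.aestronglyMeasurable]
  set L2 := ∫⁻ y, ENNReal.ofReal (g y) ∂(m2.restrict T) with hL2
  have hL2top : L2 ≠ ⊤ := by
    have : L2 ≤ ∫⁻ _, 1 ∂(m2.restrict T) := by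
      refine lintegral_mono fun y => ?_
      exact ENNReal.ofReal_le_one.2 (h1 y)
    rw [lintegral_one, Measure.restrict_apply_univ] at this
    exact (this.trans_lt (measure_lt_top _ _)).ne
  have hmono : (∫⁻ y, ENNReal.ofReal (g y) ∂(m1.restrict T)) ≤ k * L2 := by
    calc (∫⁻ y, ENNReal.ofReal (g y) ∂(m1.restrict T))
        ≤ ∫⁻ y, ENNReal.ofReal (g y) ∂((k • m2).restrict T) :=
          lintegral_mono' (Measure.restrict_mono subset_rfl hle) le_rfl
      _ = k * L2 := by rw [Measure.restrict_smul, lintegral_smul_measure, smul_eq_mul]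
  calc (∫⁻ y, ENNReal.ofReal (g y) ∂(m1.restrict T)).toReal
      ≤ (k * L2).toReal := ENNReal.toReal_mono (ENNReal.mul_ne_top hk hL2top) hmono
    _ = k.toReal * L2.toReal := ENNReal.toReal_mul

end MyAux

theorem causal_distance_transitivity_estimate {X : Type*} [MeasurableSpace X]
    (ζ σ : ℝ) (hζ : 0 ≤ ζ) (hσ : 1 ≤ σ)
    (μ ν : Measure X) [IsFiniteMeasure μ] [IsFiniteMeasure ν]
    (hcomp : Comparable ζ μ ν)
    (W : Set X) (hW : MeasurableSet W) (hμW : 0 < μ W) (hνW : 0 < ν W)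
    (f : ℝ → ℝ) (hf : ScalingType f σ) (hfpos : ∀ x > (0 : ℝ), 0 < f x)
    (A B C : X → X → Set X)
    (hA : ∀ p q, MeasurableSet (A p q)) (hB : ∀ p q, MeasurableSet (B p q))
    (hC : ∀ p q, MeasurableSet (C p q))
    (hm1 : Measurable fun pq : X × X => disc μ (A pq.1 pq.2) (B pq.1 pq.2))
    (hm2 : Measurable fun pq : X × X => disc ν (B pq.1 pq.2) (C pq.1 pq.2))
    (hm3 : Measurable fun pq : X × X => disc μ (A pq.1 pq.2) (C pq.1 pq.2)) :
    (1 / f (μ W).toReal) *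
        ∫ pq in W ×ˢ W, disc μ (A pq.1 pq.2) (C pq.1 pq.2) ∂(μ.prod μ) ≤
      2 * ((1 / f (μ W).toReal) *
          ∫ pq in W ×ˢ W, disc μ (A pq.1 pq.2) (B pq.1 pq.2) ∂(μ.prod μ)) +
        2 * Real.exp ((4 + σ) * ζ) *
          ((1 / f (ν W).toReal) *
            ∫ pq in W ×ˢ W, disc ν (B pq.1 pq.2) (C pq.1 pq.2) ∂(ν.prod ν)) := by
  -- abbreviations
  set g1 : X × X → ℝ := fun pq => disc μ (A pq.1 pq.2) (B pq.1 pq.2) with hg1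
  set g2 : X × X → ℝ := fun pq => disc ν (B pq.1 pq.2) (C pq.1 pq.2) with hg2
  set g3 : X × X → ℝ := fun pq => disc μ (A pq.1 pq.2) (C pq.1 pq.2) with hg3
  set T : Set (X × X) := W ×ˢ W with hT
  have hμWr : 0 < (μ W).toReal := ENNReal.toReal_pos hμW.ne' (by finiteness)
  have hνWr : 0 < (ν W).toReal := ENNReal.toReal_pos hνW.ne' (by finiteness)
  set fμ := f (μ W).toReal with hfμdef
  set fν := f (ν W).toReal with hfνdef
  have hfμ : 0 < fμ := hfpos _ hμWr
  have hfν : 0 < fν := hfpos _ hνWr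
  -- f comparison
  have hfcomp : fν ≤ Real.exp (σ * ζ) * fμ := by
    have h1 : (ν W).toReal ≤ Real.exp ζ * (μ W).toReal := (my_comp_toReal hcomp hW).2
    have h2 : fν ≤ f (Real.exp ζ * (μ W).toReal) := by
      refine hf.2.1 (Set.mem_Ici.2 hνWr.le) (Set.mem_Ici.2 (by positivity)) h1
    have h3 : f (Real.exp ζ * (μ W).toReal) ≤ Real.exp ζ ^ σ * fμ :=
      hf.2.2 (Real.exp ζ) (Real.one_le_exp hζ) (μ W).toReal hμWr.le
    have h4 : Real.exp ζ ^ σ = Real.exp (σ * ζ) := by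
      rw [← Real.exp_mul, mul_comm]
    rw [h4] at h3
    exact h2.trans h3
  -- pointwise estimate
  have hpt : ∀ pq : X × X, g3 pq ≤ 2 * g1 pq + (2 * Real.exp (2 * ζ)) * g2 pq := by
    intro pq
    have h1 := my_disc_triangle μ (A pq.1 pq.2) (B pq.1 pq.2) (C pq.1 pq.2)
    have h2 := my_disc_comparable hcomp (hB pq.1 pq.2) (hC pq.1 pq.2)
    simp only [hg1, hg2, hg3]
    nlinarith [h1, h2]
  -- integrability
  have hbound : ∀ (Y : Type _) (_ : MeasurableSpace Y) (m : Measure Y) (_ : IsFiniteMeasure m)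
      (g : Y → ℝ), Measurable g → (∀ y, 0 ≤ g y) → (∀ y, g y ≤ 1) → Integrable g m := by
    intro Y _ m _ g hg h0 h1
    refine (integrable_const (1:ℝ)).mono' hg.aestronglyMeasurable ?_
    exact Filter.Eventually.of_forall fun y => by
      rw [Real.norm_eq_abs, abs_of_nonneg (h0 y)]; exact h1 y
  have g1prop : ∀ pq, 0 ≤ g1 pq := fun pq => my_disc_nonneg _ _ _
  have g1prop1 : ∀ pq, g1 pq ≤ 1 := fun pq => my_disc_le_one _ _ _
  have g2prop : ∀ pq, 0 ≤ g2 pq := fun pq => my_disc_nonneg _ _ _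
  have g2prop1 : ∀ pq, g2 pq ≤ 1 := fun pq => my_disc_le_one _ _ _
  have g3prop : ∀ pq, 0 ≤ g3 pq := fun pq => my_disc_nonneg _ _ _
  have g3prop1 : ∀ pq, g3 pq ≤ 1 := fun pq => my_disc_le_one _ _ _
  have int1 : Integrable g1 ((μ.prod μ).restrict T) :=
    hbound _ _ _ inferInstance g1 hm1 g1prop g1prop1
  have int2 : Integrable g2 ((μ.prod μ).restrict T) :=
    hbound _ _ _ inferInstance g2 hm2 g2prop g2prop1
  have int3 : Integrable g3 ((μ.prod μ).restrict T) :=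
    hbound _ _ _ inferInstance g3 hm3 g3prop g3prop1
  -- integral triangle estimate
  set I1 := ∫ pq in T, g1 pq ∂(μ.prod μ) with hI1
  set I2m := ∫ pq in T, g2 pq ∂(μ.prod μ) with hI2m
  set I2n := ∫ pq in T, g2 pq ∂(ν.prod ν) with hI2n
  set I3 := ∫ pq in T, g3 pq ∂(μ.prod μ) with hI3
  have step1 : I3 ≤ 2 * I1 + (2 * Real.exp (2 * ζ)) * I2m := by
    have heq : ∫ pq in T, (2 * g1 pq + 2 * Real.exp (2 * ζ) * g2 pq) ∂(μ.prod μ)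
        = 2 * I1 + 2 * Real.exp (2 * ζ) * I2m := by
      rw [integral_add (int1.const_mul 2) (int2.const_mul (2 * Real.exp (2 * ζ))),
        integral_const_mul, integral_const_mul]
    calc I3 ≤ ∫ pq in T, (2 * g1 pq + 2 * Real.exp (2 * ζ) * g2 pq) ∂(μ.prod μ) :=
          integral_mono int3
            ((int1.const_mul 2).add (int2.const_mul (2 * Real.exp (2 * ζ)))) hpt
      _ = 2 * I1 + (2 * Real.exp (2 * ζ)) * I2m := heq
  -- measure comparison for I2
  have step2 : I2m ≤ Real.exp (2 * ζ) * I2n := by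
    have hprod : μ.prod μ ≤ (ENNReal.ofReal (Real.exp ζ) * ENNReal.ofReal (Real.exp ζ)) •
        ν.prod ν :=
      my_prod_le_smul_prod (fun s hs => (hcomp s hs).1)
    have hk : (ENNReal.ofReal (Real.exp ζ) * ENNReal.ofReal (Real.exp ζ)) ≠ ⊤ := by
      finiteness
    have := my_setIntegral_le_smul hk hprod hm2 g2prop g2prop1 T
    have hval : (ENNReal.ofReal (Real.exp ζ) * ENNReal.ofReal (Real.exp ζ)).toReal
        = Real.exp (2 * ζ) := by
      rw [ENNReal.toReal_mul, ENNReal.toReal_ofReal (Real.exp_nonneg ζ), ← Real.exp_add]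
      ring_nf
    rwa [hval] at this
  have hI2nn : 0 ≤ I2n := integral_nonneg g2prop
  have hI1nn : 0 ≤ I1 := integral_nonneg g1prop
  -- assemble
  have key : (1 / fμ) * I3 ≤ 2 * ((1 / fμ) * I1)
      + (2 * Real.exp (2 * ζ) * Real.exp (2 * ζ)) * ((1 / fμ) * I2n) := by
    have h : I3 ≤ 2 * I1 + (2 * Real.exp (2 * ζ) * Real.exp (2 * ζ)) * I2n := by
      nlinarith [Real.exp_pos (2 * ζ), step1, step2]
    calc (1 / fμ) * I3 ≤ (1 / fμ) * (2 * I1 + (2 * Real.exp (2 * ζ) * Real.exp (2 * ζ)) * I2n) :=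
          mul_le_mul_of_nonneg_left h (by positivity)
      _ = 2 * ((1 / fμ) * I1) + (2 * Real.exp (2 * ζ) * Real.exp (2 * ζ)) * ((1 / fμ) * I2n) := by
          ring
  have last : (1 / fμ) * I2n ≤ Real.exp (σ * ζ) * ((1 / fν) * I2n) := by
    have h : 1 / fμ ≤ Real.exp (σ * ζ) * (1 / fν) := by
      have h' : (1:ℝ) / fμ ≤ Real.exp (σ * ζ) / fν := by
        rw [div_le_div_iff₀ hfμ hfν]; nlinarith [hfcomp, hfμ, hfν]
      rw [mul_one_div]; exact h'
    calc (1 / fμ) * I2n ≤ (Real.exp (σ * ζ) * (1 / fν)) * I2n :=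
          mul_le_mul_of_nonneg_right h hI2nn
      _ = Real.exp (σ * ζ) * ((1 / fν) * I2n) := by ring
  have hexp : 2 * Real.exp (2 * ζ) * Real.exp (2 * ζ) * Real.exp (σ * ζ)
      = 2 * Real.exp ((4 + σ) * ζ) := by
    rw [show (4 + σ) * ζ = 2 * ζ + (2 * ζ + σ * ζ) by ring, Real.exp_add, Real.exp_add]; ring
  calc (1 / fμ) * I3
      ≤ 2 * ((1 / fμ) * I1) + (2 * Real.exp (2 * ζ) * Real.exp (2 * ζ)) * ((1 / fμ) * I2n) := key
    _ ≤ 2 * ((1 / fμ) * I1) + (2 * Real.exp (2 * ζ) * Real.exp (2 * ζ)) *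
          (Real.exp (σ * ζ) * ((1 / fν) * I2n)) := by
        refine add_le_add le_rfl (mul_le_mul_of_nonneg_left last (by positivity))
    _ = 2 * ((1 / fμ) * I1) + 2 * Real.exp ((4 + σ) * ζ) * ((1 / fν) * I2n) := by
        rw [← hexp]; ring
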